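/- Let U_{2/n} be the event that the Erdős–Rényi graph G_{n,2/n} (edges e with U_e ≤ 2/n) has a fixed set H of h vertices designated as the giant, and let u ≠ v be two isolated vertices. For X_w = 1[the smallest-labeled edge incident to w (in K_n) has its other endpoint in H] (w ∈ {u,v}), the conditional covariance equals Cov(X_u, X_v) = h^2 / ((n−1)^2 (2n−3)); in particular it is positive and equals (E X_u)^2/(2n−3). -/

import Mathlib

open MeasureTheory

namespace Stmt15Aux

variable {n : ℕ}

/-- Event (in label-configuration space): the edge `s(w,x)` has the strictly
smallest label among edges `s(w,y)`. -/
def SA (w x : Fin n) : Set (Sym2 (Fin n) → ℝ) :=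
  {g | ∀ y : Fin n, y ≠ w → y ≠ x → g s(w, x) < g s(w, y)}

/-- Event: edge `e` has the strictly smallest label among `R`. -/
def SGM (R : Finset (Sym2 (Fin n))) (e : Sym2 (Fin n)) : Set (Sym2 (Fin n) → ℝ) :=
  {g | ∀ f ∈ R, f ≠ e → g e < g f}

lemma measurableSet_SA (w x : Fin n) : MeasurableSet (SA w x) := by
  have : SA w x
      = ⋂ (y : Fin n) (_ : y ≠ w) (_ : y ≠ x), {g : Sym2 (Fin n) → ℝ | g s(w,x) < g s(w,y)} := by
    ext g; simp [SA]
  rw [this]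
  exact MeasurableSet.iInter fun y => MeasurableSet.iInter fun _ => MeasurableSet.iInter fun _ =>
    measurableSet_lt (measurable_pi_apply _) (measurable_pi_apply _)

lemma measurableSet_SGM (R : Finset (Sym2 (Fin n))) (e : Sym2 (Fin n)) :
    MeasurableSet (SGM R e) := by
  have : SGM R e
      = ⋂ (f : Sym2 (Fin n)) (_ : f ∈ R) (_ : f ≠ e), {g : Sym2 (Fin n) → ℝ | g e < g f} := by
    ext g; simp [SGM]
  rw [this]
  exact MeasurableSet.iInter fun f => MeasurableSet.iInter fun _ => MeasurableSet.iInter fun _ =>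
    measurableSet_lt (measurable_pi_apply _) (measurable_pi_apply _)

lemma SA_swap (w x x' : Fin n) (hxw : x ≠ w) (hx'w : x' ≠ w) (hxx' : x ≠ x')
    (g : Sym2 (Fin n) → ℝ) :
    (fun e => g (Equiv.swap s(w,x) s(w,x') e)) ∈ SA w x ↔ g ∈ SA w x' := by
  classical
  constructor
  · intro hg y hyw hyx'
    by_cases hyx : y = x
    · subst hyx
      have h1 := hg x' hx'w (Ne.symm hxx')
      simpa [Equiv.swap_apply_left, Equiv.swap_apply_right] using h1
    · have h1 := hg y hyw hyx
      have e1 : s(w,y) ≠ s(w,x) := fun hc => hyx (Sym2.congr_right.mp hc)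
      have e2 : s(w,y) ≠ s(w,x') := fun hc => hyx' (Sym2.congr_right.mp hc)
      simpa [Equiv.swap_apply_left, Equiv.swap_apply_of_ne_of_ne e1 e2] using h1
  · intro hg y hyw hyx
    by_cases hyx' : y = x'
    · subst hyx'
      have h1 := hg x hxw hxx'
      simpa [Equiv.swap_apply_left, Equiv.swap_apply_right] using h1
    · have h1 := hg y hyw hyx'
      have e1 : s(w,y) ≠ s(w,x) := fun hc => hyx (Sym2.congr_right.mp hc)
      have e2 : s(w,y) ≠ s(w,x') := fun hc => hyx' (Sym2.congr_right.mp hc)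
      simpa [Equiv.swap_apply_left, Equiv.swap_apply_of_ne_of_ne e1 e2] using h1

lemma swap_mem_finset {R : Finset (Sym2 (Fin n))} {a b : Sym2 (Fin n)}
    (ha : a ∈ R) (hb : b ∈ R) {f : Sym2 (Fin n)} (hf : f ∈ R) :
    Equiv.swap a b f ∈ R := by
  classical
  by_cases hfa : f = a
  · subst hfa; simpa [Equiv.swap_apply_left] using hb
  by_cases hfb : f = b
  · subst hfb; simpa [Equiv.swap_apply_right] using ha
  · simpa [Equiv.swap_apply_of_ne_of_ne hfa hfb] using hf

lemma SGM_swap (R : Finset (Sym2 (Fin n))) {e e' : Sym2 (Fin n)}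
    (he : e ∈ R) (he' : e' ∈ R) (g : Sym2 (Fin n) → ℝ) :
    (fun f => g (Equiv.swap e e' f)) ∈ SGM R e ↔ g ∈ SGM R e' := by
  classical
  constructor
  · intro hg f hf hfe'
    have hmem : Equiv.swap e e' f ∈ R := swap_mem_finset he he' hf
    have hne : Equiv.swap e e' f ≠ e := by
      intro hc
      apply hfe'
      have := (Equiv.apply_eq_iff_eq_symm_apply (Equiv.swap e e')).mp hc
      simpa [Equiv.symm_swap, Equiv.swap_apply_left] using this
    have h1 := hg _ hmem hne
    simpa [Equiv.swap_apply_left, Equiv.swap_apply_self] using h1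
  · intro hg f hf hfe
    have hmem : Equiv.swap e e' f ∈ R := swap_mem_finset he he' hf
    have hne : Equiv.swap e e' f ≠ e' := by
      intro hc
      apply hfe
      have := (Equiv.apply_eq_iff_eq_symm_apply (Equiv.swap e e')).mp hc
      simpa [Equiv.symm_swap, Equiv.swap_apply_right] using this
    have h1 := hg _ hmem hne
    simpa [Equiv.swap_apply_left] using h1

lemma SGM_swap_fix (R : Finset (Sym2 (Fin n))) {a b c : Sym2 (Fin n)}
    (ha : a ∈ R) (hb : b ∈ R) (hca : c ≠ a) (hcb : c ≠ b) (g : Sym2 (Fin n) → ℝ) :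
    (fun f => g (Equiv.swap a b f)) ∈ SGM R c ↔ g ∈ SGM R c := by
  classical
  have hcfix : Equiv.swap a b c = c := Equiv.swap_apply_of_ne_of_ne hca hcb
  constructor
  · intro hg f hf hfc
    have hmem : Equiv.swap a b f ∈ R := swap_mem_finset ha hb hf
    have hne : Equiv.swap a b f ≠ c := by
      intro hc
      apply hfc
      have := (Equiv.apply_eq_iff_eq_symm_apply (Equiv.swap a b)).mp hc
      simpa [Equiv.symm_swap, hcfix] using this
    have h1 := hg _ hmem hne
    simpa [hcfix, Equiv.swap_apply_self] using h1
  · intro hg f hf hfc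
    have hmem : Equiv.swap a b f ∈ R := swap_mem_finset ha hb hf
    have hne : Equiv.swap a b f ≠ c := by
      intro hc
      apply hfc
      have := (Equiv.apply_eq_iff_eq_symm_apply (Equiv.swap a b)).mp hc
      simpa [Equiv.symm_swap, hcfix] using this
    have h1 := hg _ hmem hne
    simpa [hcfix] using h1

end Stmt15Aux

open Stmt15Aux

/- **Covariance of the "minimal edge goes to the giant" indicators for two isolated
vertices.** Conditioned on the component structure of `G_{n,2/n}` with giant `H` of
size `h ≥ 1` and isolated vertices `u ≠ v`, the labels of edges incident to `{u,v}`
are exchangeable and a.s. pairwise distinct. With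
`X w = 1[the smallest-labeled edge incident to w has its other endpoint in H]`,
`Cov(X u, X v) = h² / ((n-1)² (2n-3))`; in particular it is positive and equals
`(E X u)² / (2n-3)`. -/
open Classical in
theorem stmt_15 {Ω : Type*} [MeasurableSpace Ω] (μ : Measure Ω) [IsProbabilityMeasure μ]
    (n : ℕ) (H : Finset (Fin n)) (h : ℕ) (hHcard : H.card = h) (hh : 1 ≤ h)
    (u v : Fin n) (huv : u ≠ v) (hu : u ∉ H) (hv : v ∉ H)
    (ℓ : Sym2 (Fin n) → Ω → ℝ)
    (hmeas : ∀ e, Measurable (ℓ e))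
    (Rel : Set (Sym2 (Fin n)))
    (hRel : Rel = {e : Sym2 (Fin n) | (u ∈ e ∨ v ∈ e) ∧ ¬ e.IsDiag})
    (hdist : ∀ᵐ ω ∂μ, ∀ e ∈ Rel, ∀ f ∈ Rel, e ≠ f → ℓ e ω ≠ ℓ f ω)
    (hexch : ∀ π : Sym2 (Fin n) ≃ Sym2 (Fin n),
      (∀ e, e ∈ Rel ↔ π e ∈ Rel) → (∀ e ∉ Rel, π e = e) →
      Measure.map (fun ω => fun e => ℓ (π e) ω) μ
        = Measure.map (fun ω => fun e => ℓ e ω) μ) :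
    let X : Fin n → Ω → ℝ := fun w ω =>
      if ∃ x ∈ H, ∀ y : Fin n, y ≠ w → y ≠ x → ℓ s(w, x) ω < ℓ s(w, y) ω then 1 else 0
    ((∫ ω, X u ω * X v ω ∂μ) - (∫ ω, X u ω ∂μ) * (∫ ω, X v ω ∂μ)
        = (h : ℝ) ^ 2 / (((n : ℝ) - 1) ^ 2 * (2 * (n : ℝ) - 3))) ∧
    (0 < (∫ ω, X u ω * X v ω ∂μ) - (∫ ω, X u ω ∂μ) * (∫ ω, X v ω ∂μ)) ∧
    ((∫ ω, X u ω * X v ω ∂μ) - (∫ ω, X u ω ∂μ) * (∫ ω, X v ω ∂μ)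
        = (∫ ω, X u ω ∂μ) ^ 2 / (2 * (n : ℝ) - 3)) := by
  classical
  intro X
  have hXdef : ∀ w ω, X w ω
      = if ∃ x ∈ H, ∀ y : Fin n, y ≠ w → y ≠ x → ℓ s(w, x) ω < ℓ s(w, y) ω then (1:ℝ) else 0 :=
    fun w ω => rfl
  -- basic vertex facts
  have hHu : ∀ x ∈ H, x ≠ u := fun x hx hc => hu (hc ▸ hx)
  have hHv : ∀ x ∈ H, x ≠ v := fun x hx hc => hv (hc ▸ hx)
  obtain ⟨x₀, hx₀⟩ : H.Nonempty := Finset.card_pos.mp (by rw [hHcard]; omega)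
  have hn3 : 3 ≤ n := by
    have h3 : ({u, v, x₀} : Finset (Fin n)).card = 3 := by
      rw [Finset.card_insert_of_notMem (by simp [huv, (hHu x₀ hx₀).symm]),
        Finset.card_insert_of_notMem (by simp [(hHv x₀ hx₀).symm]), Finset.card_singleton]
    calc (3:ℕ) = ({u,v,x₀} : Finset (Fin n)).card := h3.symm
      _ ≤ Finset.univ.card := Finset.card_le_univ _
      _ = n := by rw [Finset.card_univ, Fintype.card_fin]
  have hN3 : (3:ℝ) ≤ (n:ℝ) := by exact_mod_cast hn3
  have hN1pos : (0:ℝ) < (n:ℝ) - 1 := by linarith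
  have h2N3pos : (0:ℝ) < 2*(n:ℝ) - 3 := by linarith
  have hhR : (0:ℝ) < (h:ℝ) := by exact_mod_cast Nat.lt_of_lt_of_le Nat.zero_lt_one hh
  -- the finset of relevant edges
  set RelF : Finset (Sym2 (Fin n)) :=
    Finset.univ.filter (fun e => (u ∈ e ∨ v ∈ e) ∧ ¬ e.IsDiag) with hRelFdef
  have hRelmem : ∀ e, e ∈ RelF ↔ e ∈ Rel := by
    intro e; rw [hRel, hRelFdef]; simp
  have hmemchar : ∀ e, e ∈ RelF ↔
      (∃ x, x ≠ u ∧ e = s(u,x)) ∨ (∃ y, y ≠ v ∧ e = s(v,y)) := by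
    intro e
    induction e with
    | _ a b =>
      rw [hRelFdef]
      simp only [Finset.mem_filter, Finset.mem_univ, true_and, Sym2.mem_iff]
      have hd : s(a,b).IsDiag ↔ a = b := Sym2.isDiag_iff_proj_eq
      rw [hd]
      constructor
      · rintro ⟨hab, hne⟩
        rcases hab with (h1 | h1) | (h1 | h1)
        · exact Or.inl ⟨b, fun hc => hne (h1.symm.trans hc.symm), by rw [← h1]⟩
        · exact Or.inl ⟨a, fun hc => hne (hc.trans h1), by rw [← h1, Sym2.eq_swap]⟩
        · exact Or.inr ⟨b, fun hc => hne (h1.symm.trans hc.symm), by rw [← h1]⟩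
        · exact Or.inr ⟨a, fun hc => hne (hc.trans h1), by rw [← h1, Sym2.eq_swap]⟩
      · rintro (⟨x, hx, hxe⟩ | ⟨y, hy, hye⟩)
        · rcases Sym2.eq_iff.mp hxe with ⟨h1, h2⟩ | ⟨h1, h2⟩
          · exact ⟨Or.inl (Or.inl h1.symm), fun hc => hx ((h2.symm.trans hc.symm).trans h1)⟩
          · exact ⟨Or.inl (Or.inr h2.symm), fun hc => hx (h1.symm.trans (hc.trans h2))⟩
        · rcases Sym2.eq_iff.mp hye with ⟨h1, h2⟩ | ⟨h1, h2⟩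
          · exact ⟨Or.inr (Or.inl h1.symm), fun hc => hy ((h2.symm.trans hc.symm).trans h1)⟩
          · exact ⟨Or.inr (Or.inr h2.symm), fun hc => hy (h1.symm.trans (hc.trans h2))⟩
  have hinj : ∀ w : Fin n, Function.Injective (fun z : Fin n => s(w,z)) :=
    fun w z z' hz => Sym2.congr_right.mp hz
  have hcardRelF : RelF.card = 2*n - 3 := by
    have hEu : RelF = ((Finset.univ.erase u).image (fun z => s(u,z)))
        ∪ ((Finset.univ.erase v).image (fun z => s(v,z))) := by
      ext e
      rw [hmemchar, Finset.mem_union]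
      simp only [Finset.mem_image, Finset.mem_erase, Finset.mem_univ, and_true]
      constructor
      · rintro (⟨x, hx, rfl⟩ | ⟨y, hy, rfl⟩)
        · exact Or.inl ⟨x, hx, rfl⟩
        · exact Or.inr ⟨y, hy, rfl⟩
      · rintro (⟨x, hx, rfl⟩ | ⟨y, hy, rfl⟩)
        · exact Or.inl ⟨x, hx, rfl⟩
        · exact Or.inr ⟨y, hy, rfl⟩
    have hint : ((Finset.univ.erase u).image (fun z => s(u,z)))
        ∩ ((Finset.univ.erase v).image (fun z => s(v,z))) = {s(u,v)} := by
      ext e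
      simp only [Finset.mem_inter, Finset.mem_image, Finset.mem_erase, Finset.mem_univ,
        and_true, Finset.mem_singleton]
      constructor
      · rintro ⟨⟨x, hx, rfl⟩, ⟨y, hy, hye⟩⟩
        rcases Sym2.eq_iff.mp hye with ⟨h1, h2⟩ | ⟨h1, h2⟩
        · exact absurd h1 huv.symm
        · rw [← h1]
      · rintro rfl
        exact ⟨⟨v, huv.symm, rfl⟩, ⟨u, huv, Sym2.eq_swap⟩⟩
    have hcu : ((Finset.univ.erase u).image (fun z => s(u,z))).card = n - 1 := by
      rw [Finset.card_image_of_injective _ (hinj u), Finset.card_erase_of_mem (Finset.mem_univ u),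
        Finset.card_univ, Fintype.card_fin]
    have hcv : ((Finset.univ.erase v).image (fun z => s(v,z))).card = n - 1 := by
      rw [Finset.card_image_of_injective _ (hinj v), Finset.card_erase_of_mem (Finset.mem_univ v),
        Finset.card_univ, Fintype.card_fin]
    have hsum := Finset.card_union_add_card_inter
      ((Finset.univ.erase u).image (fun z => s(u,z)))
      ((Finset.univ.erase v).image (fun z => s(v,z)))
    rw [hint, hcu, hcv, Finset.card_singleton] at hsum
    rw [hEu]
    omega
  -- events
  have hL : Measurable (fun ω => fun e => ℓ e ω) := measurable_pi_lambda _ hmeas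
  set A : Fin n → Fin n → Set Ω :=
    fun w x => (fun ω => fun e => ℓ e ω) ⁻¹' (Stmt15Aux.SA w x) with hAdef
  set GM : Sym2 (Fin n) → Set Ω :=
    fun e => (fun ω => fun e => ℓ e ω) ⁻¹' (Stmt15Aux.SGM RelF e) with hGMdef
  have hAmem : ∀ w x ω, ω ∈ A w x ↔
      ∀ y : Fin n, y ≠ w → y ≠ x → ℓ s(w,x) ω < ℓ s(w,y) ω := fun _ _ _ => Iff.rfl
  have hGMmem : ∀ e ω, ω ∈ GM e ↔ ∀ f ∈ RelF, f ≠ e → ℓ e ω < ℓ f ω := fun _ _ => Iff.rfl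
  have hAms : ∀ w x, MeasurableSet (A w x) := fun w x => hL (measurableSet_SA w x)
  have hGMms : ∀ e, MeasurableSet (GM e) := fun e => hL (measurableSet_SGM RelF e)
  -- exchangeability transfer
  have key : ∀ π : Sym2 (Fin n) ≃ Sym2 (Fin n),
      (∀ e, e ∈ Rel ↔ π e ∈ Rel) → (∀ e ∉ Rel, π e = e) →
      ∀ S : Set (Sym2 (Fin n) → ℝ), MeasurableSet S →
      μ ((fun ω => fun e => ℓ (π e) ω) ⁻¹' S) = μ ((fun ω => fun e => ℓ e ω) ⁻¹' S) := by
    intro π h1 h2 S hS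
    rw [← Measure.map_apply (measurable_pi_lambda _ fun e => hmeas (π e)) hS,
        ← Measure.map_apply hL hS, hexch π h1 h2]
  have hswapRel : ∀ a b : Sym2 (Fin n), a ∈ RelF → b ∈ RelF →
      (∀ e, e ∈ Rel ↔ Equiv.swap a b e ∈ Rel) ∧ (∀ e ∉ Rel, Equiv.swap a b e = e) := by
    intro a b ha hb
    have ha' := (hRelmem a).mp ha
    have hb' := (hRelmem b).mp hb
    constructor
    · intro e
      by_cases hea : e = a
      · subst hea; rw [Equiv.swap_apply_left]; exact ⟨fun _ => hb', fun _ => ha'⟩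
      by_cases heb : e = b
      · subst heb; rw [Equiv.swap_apply_right]; exact ⟨fun _ => ha', fun _ => hb'⟩
      · rw [Equiv.swap_apply_of_ne_of_ne hea heb]
    · intro e he
      exact Equiv.swap_apply_of_ne_of_ne (fun hc => he (hc ▸ ha')) (fun hc => he (hc ▸ hb'))
  have hmemW : ∀ w : Fin n, (w = u ∨ w = v) → ∀ z, z ≠ w → s(w,z) ∈ RelF := by
    intro w hw z hz
    rcases hw with rfl | rfl
    · exact (hmemchar _).mpr (Or.inl ⟨z, hz, rfl⟩)
    · exact (hmemchar _).mpr (Or.inr ⟨z, hz, rfl⟩)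
  -- equal probabilities
  have hAeq : ∀ w : Fin n, (w = u ∨ w = v) → ∀ x x', x ≠ w → x' ≠ w →
      μ (A w x) = μ (A w x') := by
    intro w hw x x' hxw hx'w
    by_cases hxx' : x = x'
    · rw [hxx']
    have h1 := hswapRel _ _ (hmemW w hw x hxw) (hmemW w hw x' hx'w)
    have h2 := key (Equiv.swap s(w,x) s(w,x')) h1.1 h1.2 (Stmt15Aux.SA w x)
      (measurableSet_SA w x)
    have hset : (fun ω => fun e => ℓ ((Equiv.swap s(w,x) s(w,x')) e) ω)
        ⁻¹' Stmt15Aux.SA w x = A w x' := by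
      ext ω
      exact Stmt15Aux.SA_swap w x x' hxw hx'w hxx' (fun e => ℓ e ω)
    rw [hset] at h2
    exact h2.symm
  have hGMeq : ∀ e ∈ RelF, ∀ e' ∈ RelF, μ (GM e) = μ (GM e') := by
    intro e he e' he'
    by_cases hee' : e = e'
    · rw [hee']
    have h1 := hswapRel _ _ he he'
    have h2 := key (Equiv.swap e e') h1.1 h1.2 (Stmt15Aux.SGM RelF e)
      (measurableSet_SGM RelF e)
    have hset : (fun ω => fun f => ℓ ((Equiv.swap e e') f) ω)
        ⁻¹' Stmt15Aux.SGM RelF e = GM e' := by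
      ext ω
      exact Stmt15Aux.SGM_swap RelF he he' (fun f => ℓ f ω)
    rw [hset] at h2
    exact h2.symm
  have hBeq : ∀ w : Fin n, (w = u ∨ w = v) → ∀ c ∈ RelF, (∀ z, c ≠ s(w,z)) →
      ∀ y y', y ≠ w → y' ≠ w → μ (GM c ∩ A w y) = μ (GM c ∩ A w y') := by
    intro w hw c hc hcz y y' hyw hy'w
    by_cases hyy' : y = y'
    · rw [hyy']
    have h1 := hswapRel _ _ (hmemW w hw y hyw) (hmemW w hw y' hy'w)
    have h2 := key (Equiv.swap s(w,y) s(w,y')) h1.1 h1.2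
      (Stmt15Aux.SGM RelF c ∩ Stmt15Aux.SA w y)
      ((measurableSet_SGM RelF c).inter (measurableSet_SA w y))
    have hset : (fun ω => fun f => ℓ ((Equiv.swap s(w,y) s(w,y')) f) ω)
        ⁻¹' (Stmt15Aux.SGM RelF c ∩ Stmt15Aux.SA w y) = GM c ∩ A w y' := by
      ext ω
      constructor
      · rintro ⟨hg1, hg2⟩
        exact ⟨(Stmt15Aux.SGM_swap_fix RelF (hmemW w hw y hyw) (hmemW w hw y' hy'w)
            (hcz y) (hcz y') (fun e => ℓ e ω)).mp hg1,
          (Stmt15Aux.SA_swap w y y' hyw hy'w hyy' (fun e => ℓ e ω)).mp hg2⟩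
      · rintro ⟨hg1, hg2⟩
        exact ⟨(Stmt15Aux.SGM_swap_fix RelF (hmemW w hw y hyw) (hmemW w hw y' hy'w)
            (hcz y) (hcz y') (fun e => ℓ e ω)).mpr hg1,
          (Stmt15Aux.SA_swap w y y' hyw hy'w hyy' (fun e => ℓ e ω)).mpr hg2⟩
    rw [hset] at h2
    exact h2.symm
  -- pointwise disjointness
  have hAdisj : ∀ (w x x' : Fin n), x ≠ w → x' ≠ w → x ≠ x' →
      ∀ ω, ω ∈ A w x → ω ∈ A w x' → False := by
    intro w x x' hxw hx'w hxx' ω h1 h2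
    have l1 := (hAmem w x ω).mp h1 x' hx'w (Ne.symm hxx')
    have l2 := (hAmem w x' ω).mp h2 x hxw hxx'
    exact absurd (l1.trans l2) (lt_irrefl _)
  have hGMdisj : ∀ e ∈ RelF, ∀ f ∈ RelF, e ≠ f →
      ∀ ω, ω ∈ GM e → ω ∈ GM f → False := by
    intro e he f hf hef ω h1 h2
    have l1 := (hGMmem e ω).mp h1 f hf (Ne.symm hef)
    have l2 := (hGMmem f ω).mp h2 e he hef
    exact absurd (l1.trans l2) (lt_irrefl _)
  -- a.s. existence of minimizers
  have hexA : ∀ ω, (∀ e ∈ Rel, ∀ f ∈ Rel, e ≠ f → ℓ e ω ≠ ℓ f ω) →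
      ∀ w : Fin n, (w = u ∨ w = v) → ∃ x, x ≠ w ∧ ω ∈ A w x := by
    intro ω hω w hw
    have hne : (Finset.univ.erase w).Nonempty := by
      rw [← Finset.card_pos, Finset.card_erase_of_mem (Finset.mem_univ w),
        Finset.card_univ, Fintype.card_fin]
      omega
    obtain ⟨x, hxmem, hxmin⟩ :=
      Finset.exists_min_image (Finset.univ.erase w) (fun z => ℓ s(w,z) ω) hne
    have hxw : x ≠ w := (Finset.mem_erase.mp hxmem).1
    refine ⟨x, hxw, (hAmem w x ω).mpr fun y hyw hyx => ?_⟩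
    have hle := hxmin y (Finset.mem_erase.mpr ⟨hyw, Finset.mem_univ y⟩)
    have hne2 : ℓ s(w,x) ω ≠ ℓ s(w,y) ω := by
      refine hω _ ((hRelmem _).mp (hmemW w hw x hxw)) _ ((hRelmem _).mp (hmemW w hw y hyw)) ?_
      exact fun hc => hyx (Sym2.congr_right.mp hc).symm
    exact lt_of_le_of_ne hle hne2
  have hexGM : ∀ ω, (∀ e ∈ Rel, ∀ f ∈ Rel, e ≠ f → ℓ e ω ≠ ℓ f ω) →
      ∃ e ∈ RelF, ω ∈ GM e := by
    intro ω hω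
    have hne : RelF.Nonempty := ⟨s(u,v), hmemW u (Or.inl rfl) v huv.symm⟩
    obtain ⟨e, hemem, hemin⟩ := Finset.exists_min_image RelF (fun f => ℓ f ω) hne
    refine ⟨e, hemem, (hGMmem e ω).mpr fun f hf hfe => ?_⟩
    exact lt_of_le_of_ne (hemin f hf)
      (hω _ ((hRelmem _).mp hemem) _ ((hRelmem _).mp hf) (Ne.symm hfe))
  -- partition: each A w x has measure 1/(n-1)
  have hAval : ∀ w : Fin n, (w = u ∨ w = v) → ∀ x, x ≠ w →
      (μ (A w x)).toReal = 1/((n:ℝ)-1) := by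
    intro w hw x hxw
    have hUms : MeasurableSet (⋃ x' ∈ Finset.univ.erase w, A w x') :=
      MeasurableSet.iUnion fun x' => MeasurableSet.iUnion fun _ => hAms w x'
    have hcover : ∀ᵐ ω ∂μ, ω ∈ ⋃ x' ∈ Finset.univ.erase w, A w x' := by
      filter_upwards [hdist] with ω hω
      obtain ⟨x', hx'w, hx'⟩ := hexA ω hω w hw
      exact Set.mem_biUnion (Finset.mem_erase.mpr ⟨hx'w, Finset.mem_univ x'⟩) hx'
    have hone : μ (⋃ x' ∈ Finset.univ.erase w, A w x') = 1 := by
      rw [← prob_compl_eq_zero_iff hUms]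
      exact ae_iff.mp hcover
    have hdisjU : (↑(Finset.univ.erase w) : Set (Fin n)).PairwiseDisjoint (A w) := by
      intro a ha b hb hab
      refine Set.disjoint_left.mpr fun ω h1 h2 => ?_
      exact hAdisj w a b (Finset.mem_erase.mp ha).1 (Finset.mem_erase.mp hb).1 hab ω h1 h2
    rw [measure_biUnion_finset hdisjU (fun b _ => hAms w b)] at hone
    have hconst : ∀ x' ∈ Finset.univ.erase w, μ (A w x') = μ (A w x) :=
      fun x' hx' => hAeq w hw x' x (Finset.mem_erase.mp hx').1 hxw
    rw [Finset.sum_congr rfl hconst, Finset.sum_const,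
      Finset.card_erase_of_mem (Finset.mem_univ w), Finset.card_univ, Fintype.card_fin,
      nsmul_eq_mul] at hone
    have htr := congrArg ENNReal.toReal hone
    rw [ENNReal.toReal_mul, ENNReal.toReal_natCast, ENNReal.toReal_one] at htr
    have hcast : ((n - 1 : ℕ) : ℝ) = (n:ℝ) - 1 := by
      rw [Nat.cast_sub (by omega), Nat.cast_one]
    rw [hcast] at htr
    field_simp
    linarith [htr]
  -- each GM e has measure 1/(2n-3)
  have hGMval : ∀ e ∈ RelF, (μ (GM e)).toReal = 1/(2*(n:ℝ)-3) := by
    intro e he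
    have hUms : MeasurableSet (⋃ f ∈ RelF, GM f) :=
      MeasurableSet.iUnion fun f => MeasurableSet.iUnion fun _ => hGMms f
    have hcover : ∀ᵐ ω ∂μ, ω ∈ ⋃ f ∈ RelF, GM f := by
      filter_upwards [hdist] with ω hω
      obtain ⟨f, hf, hωf⟩ := hexGM ω hω
      exact Set.mem_biUnion hf hωf
    have hone : μ (⋃ f ∈ RelF, GM f) = 1 := by
      rw [← prob_compl_eq_zero_iff hUms]
      exact ae_iff.mp hcover
    have hdisjU : (↑RelF : Set (Sym2 (Fin n))).PairwiseDisjoint GM := by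
      intro a ha b hb hab
      refine Set.disjoint_left.mpr fun ω h1 h2 => ?_
      exact hGMdisj a (by simpa using ha) b (by simpa using hb) hab ω h1 h2
    rw [measure_biUnion_finset hdisjU (fun b _ => hGMms b)] at hone
    have hconst : ∀ f ∈ RelF, μ (GM f) = μ (GM e) := fun f hf => hGMeq f hf e he
    rw [Finset.sum_congr rfl hconst, Finset.sum_const, hcardRelF, nsmul_eq_mul] at hone
    have htr := congrArg ENNReal.toReal hone
    rw [ENNReal.toReal_mul, ENNReal.toReal_natCast, ENNReal.toReal_one] at htr
    have hcast : ((2*n - 3 : ℕ) : ℝ) = 2*(n:ℝ) - 3 := by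
      rw [Nat.cast_sub (by omega)]
      push_cast
      ring
    rw [hcast] at htr
    field_simp
    linarith [htr]
  -- conditional value
  have hBval : ∀ w : Fin n, (w = u ∨ w = v) → ∀ c ∈ RelF, (∀ z, c ≠ s(w,z)) →
      ∀ y, y ≠ w → (μ (GM c ∩ A w y)).toReal = (1/(2*(n:ℝ)-3)) * (1/((n:ℝ)-1)) := by
    intro w hw c hc hcz y hyw
    have hUms : MeasurableSet (⋃ y' ∈ Finset.univ.erase w, A w y') :=
      MeasurableSet.iUnion fun y' => MeasurableSet.iUnion fun _ => hAms w y'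
    have hcover : ∀ᵐ ω ∂μ, ω ∈ ⋃ y' ∈ Finset.univ.erase w, A w y' := by
      filter_upwards [hdist] with ω hω
      obtain ⟨x', hx'w, hx'⟩ := hexA ω hω w hw
      exact Set.mem_biUnion (Finset.mem_erase.mpr ⟨hx'w, Finset.mem_univ x'⟩) hx'
    have hzero : μ (⋃ y' ∈ Finset.univ.erase w, A w y')ᶜ = 0 := by
      rw [prob_compl_eq_zero_iff hUms, ← prob_compl_eq_zero_iff hUms]
      exact ae_iff.mp hcover
    have hinter : μ (GM c ∩ ⋃ y' ∈ Finset.univ.erase w, A w y') = μ (GM c) :=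
      measure_inter_conull hzero
    rw [Set.inter_iUnion₂] at hinter
    have hdisjU : (↑(Finset.univ.erase w) : Set (Fin n)).PairwiseDisjoint
        (fun y' => GM c ∩ A w y') := by
      intro a ha b hb hab
      refine Set.disjoint_left.mpr fun ω h1 h2 => ?_
      exact hAdisj w a b (Finset.mem_erase.mp ha).1 (Finset.mem_erase.mp hb).1 hab ω h1.2 h2.2
    rw [measure_biUnion_finset hdisjU (fun b _ => ((hGMms c).inter (hAms w b)))] at hinter
    have hconst : ∀ y' ∈ Finset.univ.erase w, μ (GM c ∩ A w y') = μ (GM c ∩ A w y) :=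
      fun y' hy' => hBeq w hw c hc hcz y' y (Finset.mem_erase.mp hy').1 hyw
    rw [Finset.sum_congr rfl hconst, Finset.sum_const,
      Finset.card_erase_of_mem (Finset.mem_univ w), Finset.card_univ, Fintype.card_fin,
      nsmul_eq_mul] at hinter
    have htr := congrArg ENNReal.toReal hinter
    rw [ENNReal.toReal_mul, ENNReal.toReal_natCast, hGMval c hc] at htr
    have hcast : ((n - 1 : ℕ) : ℝ) = (n:ℝ) - 1 := by
      rw [Nat.cast_sub (by omega), Nat.cast_one]
    rw [hcast] at htr
    rw [div_mul_div_comm, one_mul]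
    rw [eq_div_iff (by positivity)]
    rw [mul_comm (2*(n:ℝ)-3)]
    calc (μ (GM c ∩ A w y)).toReal * (((n:ℝ)-1) * (2*(n:ℝ)-3))
        = (((n:ℝ)-1) * (μ (GM c ∩ A w y)).toReal) * (2*(n:ℝ)-3) := by ring
      _ = 1 := by rw [htr]; field_simp
  -- integrals of the indicators
  have hHw : ∀ w : Fin n, (w = u ∨ w = v) → ∀ x ∈ H, x ≠ w := by
    rintro w (rfl | rfl) x hx
    · exact hHu x hx
    · exact hHv x hx
  have hEums : ∀ w : Fin n, MeasurableSet (⋃ x ∈ H, A w x) :=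
    fun w => MeasurableSet.iUnion fun x => MeasurableSet.iUnion fun _ => hAms w x
  have hmemE : ∀ (w : Fin n) ω, (ω ∈ ⋃ x ∈ H, A w x) ↔
      ∃ x ∈ H, ∀ y : Fin n, y ≠ w → y ≠ x → ℓ s(w,x) ω < ℓ s(w,y) ω := by
    intro w ω
    simp only [Set.mem_iUnion, exists_prop]
    exact Iff.rfl
  have hIX : ∀ w : Fin n, (w = u ∨ w = v) → ∫ ω, X w ω ∂μ = (h:ℝ) * (1/((n:ℝ)-1)) := by
    intro w hw
    have hfun : (fun ω => X w ω) = Set.indicator (⋃ x ∈ H, A w x) 1 := by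
      funext ω
      rw [hXdef w ω, Set.indicator_apply]
      exact if_congr (hmemE w ω).symm rfl rfl
    rw [hfun, integral_indicator_one (hEums w), measureReal_def]
    have hdisjU : (↑H : Set (Fin n)).PairwiseDisjoint (A w) := by
      intro a ha b hb hab
      refine Set.disjoint_left.mpr fun ω h1 h2 => ?_
      exact hAdisj w a b (hHw w hw a (by simpa using ha)) (hHw w hw b (by simpa using hb))
        hab ω h1 h2
    rw [measure_biUnion_finset hdisjU (fun b _ => hAms w b),
      ENNReal.toReal_sum (fun a _ => measure_ne_top μ _)]
    rw [Finset.sum_congr rfl (fun x hx => hAval w hw x (hHw w hw x hx)),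
      Finset.sum_const, hHcard, nsmul_eq_mul]
  -- the joint event
  have hIXuv : ∫ ω, X u ω * X v ω ∂μ
      = (μ ((⋃ x ∈ H, A u x) ∩ (⋃ y ∈ H, A v y))).toReal := by
    have hfun : (fun ω => X u ω * X v ω)
        = Set.indicator ((⋃ x ∈ H, A u x) ∩ (⋃ y ∈ H, A v y)) 1 := by
      funext ω
      rw [hXdef u ω, hXdef v ω, Set.indicator_apply]
      by_cases h1 : ∃ x ∈ H, ∀ y : Fin n, y ≠ u → y ≠ x → ℓ s(u,x) ω < ℓ s(u,y) ω
      · by_cases h2 : ∃ x ∈ H, ∀ y : Fin n, y ≠ v → y ≠ x → ℓ s(v,x) ω < ℓ s(v,y) ω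
        · rw [if_pos h1, if_pos h2, if_pos ⟨(hmemE u ω).mpr h1, (hmemE v ω).mpr h2⟩]
          norm_num
        · have hm : ω ∉ (⋃ x ∈ H, A u x) ∩ ⋃ y ∈ H, A v y :=
            fun hc => h2 ((hmemE v ω).mp hc.2)
          rw [if_pos h1, if_neg h2, if_neg hm]
          norm_num
      · have hm : ω ∉ (⋃ x ∈ H, A u x) ∩ ⋃ y ∈ H, A v y :=
          fun hc => h1 ((hmemE u ω).mp hc.1)
        rw [if_neg h1, if_neg hm]
        norm_num
    rw [hfun, integral_indicator_one ((hEums u).inter (hEums v)), measureReal_def]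
  have hcuz : ∀ x ∈ H, ∀ z : Fin n, s(u,x) ≠ s(v,z) := by
    intro x hx z hc
    rcases Sym2.eq_iff.mp hc with ⟨h1, h2⟩ | ⟨h1, h2⟩
    · exact huv h1
    · exact (hHv x hx) h2
  have hcvz : ∀ y ∈ H, ∀ z : Fin n, s(v,y) ≠ s(u,z) := by
    intro y hy z hc
    rcases Sym2.eq_iff.mp hc with ⟨h1, h2⟩ | ⟨h1, h2⟩
    · exact huv h1.symm
    · exact (hHu y hy) h2
  have hGMsubA : ∀ w : Fin n, (w = u ∨ w = v) → ∀ x, x ≠ w → GM s(w,x) ⊆ A w x := by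
    intro w hw x hxw ω hω
    refine (hAmem w x ω).mpr fun y hyw hyx => ?_
    exact (hGMmem _ ω).mp hω s(w,y) (hmemW w hw y hyw)
      (fun hc => hyx (Sym2.congr_right.mp hc))
  set T1 : Set Ω := ⋃ x ∈ H, ⋃ y ∈ H, (GM s(u,x) ∩ A v y) with hT1def
  set T2 : Set Ω := ⋃ y ∈ H, ⋃ x ∈ H, (GM s(v,y) ∩ A u x) with hT2def
  have hT1ms : MeasurableSet T1 :=
    MeasurableSet.iUnion fun x => MeasurableSet.iUnion fun _ =>
      MeasurableSet.iUnion fun y => MeasurableSet.iUnion fun _ =>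
        (hGMms _).inter (hAms _ _)
  have hT2ms : MeasurableSet T2 :=
    MeasurableSet.iUnion fun x => MeasurableSet.iUnion fun _ =>
      MeasurableSet.iUnion fun y => MeasurableSet.iUnion fun _ =>
        (hGMms _).inter (hAms _ _)
  have hT1sub : T1 ⊆ (⋃ x ∈ H, A u x) ∩ (⋃ y ∈ H, A v y) := by
    intro ω hω
    simp only [hT1def, Set.mem_iUnion, exists_prop] at hω
    obtain ⟨x, hxH, y, hyH, h1, h2⟩ := hω
    exact ⟨Set.mem_biUnion hxH (hGMsubA u (Or.inl rfl) x (hHu x hxH) h1),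
      Set.mem_biUnion hyH h2⟩
  have hT2sub : T2 ⊆ (⋃ x ∈ H, A u x) ∩ (⋃ y ∈ H, A v y) := by
    intro ω hω
    simp only [hT2def, Set.mem_iUnion, exists_prop] at hω
    obtain ⟨y, hyH, x, hxH, h1, h2⟩ := hω
    exact ⟨Set.mem_biUnion hxH h2,
      Set.mem_biUnion hyH (hGMsubA v (Or.inr rfl) y (hHv y hyH) h1)⟩
  have hDsub : ∀ ω, (∀ e ∈ Rel, ∀ f ∈ Rel, e ≠ f → ℓ e ω ≠ ℓ f ω) →
      ω ∈ (⋃ x ∈ H, A u x) ∩ (⋃ y ∈ H, A v y) → ω ∈ T1 ∪ T2 := by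
    intro ω hω hmem
    obtain ⟨hmu, hmv⟩ := hmem
    simp only [Set.mem_iUnion, exists_prop] at hmu hmv
    obtain ⟨x, hxH, hx⟩ := hmu
    obtain ⟨y, hyH, hy⟩ := hmv
    obtain ⟨e, he, hGMe⟩ := hexGM ω hω
    rcases (hmemchar e).mp he with ⟨x₁, hx₁u, rfl⟩ | ⟨y₁, hy₁v, rfl⟩
    · have hA1 : ω ∈ A u x₁ := hGMsubA u (Or.inl rfl) x₁ hx₁u hGMe
      have hxx₁ : x = x₁ := by
        by_contra hne
        exact hAdisj u x x₁ (hHu x hxH) hx₁u hne ω hx hA1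
      subst hxx₁
      exact Or.inl (Set.mem_biUnion hxH (Set.mem_biUnion hyH ⟨hGMe, hy⟩))
    · have hA1 : ω ∈ A v y₁ := hGMsubA v (Or.inr rfl) y₁ hy₁v hGMe
      have hyy₁ : y = y₁ := by
        by_contra hne
        exact hAdisj v y y₁ (hHv y hyH) hy₁v hne ω hy hA1
      subst hyy₁
      exact Or.inr (Set.mem_biUnion hyH (Set.mem_biUnion hxH ⟨hGMe, hx⟩))
  have hT12disj : Disjoint T1 T2 := by
    refine Set.disjoint_left.mpr fun ω h1 h2 => ?_
    simp only [hT1def, hT2def, Set.mem_iUnion, exists_prop] at h1 h2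
    obtain ⟨x, hxH, y, hyH, hg1, -⟩ := h1
    obtain ⟨y', hy'H, x', hx'H, hg2, -⟩ := h2
    exact hGMdisj s(u,x) (hmemW u (Or.inl rfl) x (hHu x hxH))
      s(v,y') (hmemW v (Or.inr rfl) y' (hHv y' hy'H))
      (hcuz x hxH y') ω hg1 hg2
  have hmuT : μ ((⋃ x ∈ H, A u x) ∩ (⋃ y ∈ H, A v y)) = μ T1 + μ T2 := by
    have h0 : μ (((⋃ x ∈ H, A u x) ∩ (⋃ y ∈ H, A v y)) \ (T1 ∪ T2)) = 0 := by
      refine measure_mono_null ?_ (ae_iff.mp hdist)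
      intro ω hω
      exact fun hp => hω.2 (hDsub ω hp hω.1)
    calc μ ((⋃ x ∈ H, A u x) ∩ (⋃ y ∈ H, A v y))
        = μ (((⋃ x ∈ H, A u x) ∩ (⋃ y ∈ H, A v y)) ∩ (T1 ∪ T2))
          + μ (((⋃ x ∈ H, A u x) ∩ (⋃ y ∈ H, A v y)) \ (T1 ∪ T2)) :=
          (measure_inter_add_diff _ (hT1ms.union hT2ms)).symm
      _ = μ (T1 ∪ T2) := by
          rw [h0, add_zero, Set.inter_eq_self_of_subset_right (Set.union_subset hT1sub hT2sub)]
      _ = μ T1 + μ T2 := measure_union hT12disj hT2ms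
  -- values of T1 and T2
  have hT1val : (μ T1).toReal = (h:ℝ) * ((h:ℝ) * ((1/(2*(n:ℝ)-3)) * (1/((n:ℝ)-1)))) := by
    have hdisjO : (↑H : Set (Fin n)).PairwiseDisjoint
        (fun x => ⋃ y ∈ H, (GM s(u,x) ∩ A v y)) := by
      intro a ha b hb hab
      refine Set.disjoint_left.mpr fun ω h1 h2 => ?_
      simp only [Set.mem_iUnion, exists_prop] at h1 h2
      obtain ⟨y, hyH, hg1, -⟩ := h1
      obtain ⟨y', hy'H, hg2, -⟩ := h2
      exact hGMdisj s(u,a) (hmemW u (Or.inl rfl) a (hHu a (by simpa using ha)))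
        s(u,b) (hmemW u (Or.inl rfl) b (hHu b (by simpa using hb)))
        (fun hc => hab (Sym2.congr_right.mp hc)) ω hg1 hg2
    rw [hT1def, measure_biUnion_finset hdisjO (fun b _ =>
      MeasurableSet.iUnion fun y => MeasurableSet.iUnion fun _ => (hGMms _).inter (hAms _ _)),
      ENNReal.toReal_sum (fun a _ => measure_ne_top μ _)]
    have hx1 : ∀ x ∈ H, (μ (⋃ y ∈ H, (GM s(u,x) ∩ A v y))).toReal
        = (h:ℝ) * ((1/(2*(n:ℝ)-3)) * (1/((n:ℝ)-1))) := by
      intro x hx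
      have hdisjI : (↑H : Set (Fin n)).PairwiseDisjoint (fun y => GM s(u,x) ∩ A v y) := by
        intro a ha b hb hab
        refine Set.disjoint_left.mpr fun ω h1 h2 => ?_
        exact hAdisj v a b (hHv a (by simpa using ha)) (hHv b (by simpa using hb)) hab
          ω h1.2 h2.2
      rw [measure_biUnion_finset hdisjI (fun b _ => (hGMms _).inter (hAms _ _)),
        ENNReal.toReal_sum (fun a _ => measure_ne_top μ _)]
      have hy1 : ∀ y ∈ H, (μ (GM s(u,x) ∩ A v y)).toReal
          = (1/(2*(n:ℝ)-3)) * (1/((n:ℝ)-1)) := by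
        intro y hy
        exact hBval v (Or.inr rfl) s(u,x) (hmemW u (Or.inl rfl) x (hHu x hx))
          (fun z => hcuz x hx z) y (hHv y hy)
      rw [Finset.sum_congr rfl hy1, Finset.sum_const, hHcard, nsmul_eq_mul]
    rw [Finset.sum_congr rfl hx1, Finset.sum_const, hHcard, nsmul_eq_mul]
  have hT2val : (μ T2).toReal = (h:ℝ) * ((h:ℝ) * ((1/(2*(n:ℝ)-3)) * (1/((n:ℝ)-1)))) := by
    have hdisjO : (↑H : Set (Fin n)).PairwiseDisjoint
        (fun y => ⋃ x ∈ H, (GM s(v,y) ∩ A u x)) := by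
      intro a ha b hb hab
      refine Set.disjoint_left.mpr fun ω h1 h2 => ?_
      simp only [Set.mem_iUnion, exists_prop] at h1 h2
      obtain ⟨y, hyH, hg1, -⟩ := h1
      obtain ⟨y', hy'H, hg2, -⟩ := h2
      exact hGMdisj s(v,a) (hmemW v (Or.inr rfl) a (hHv a (by simpa using ha)))
        s(v,b) (hmemW v (Or.inr rfl) b (hHv b (by simpa using hb)))
        (fun hc => hab (Sym2.congr_right.mp hc)) ω hg1 hg2
    rw [hT2def, measure_biUnion_finset hdisjO (fun b _ =>
      MeasurableSet.iUnion fun y => MeasurableSet.iUnion fun _ => (hGMms _).inter (hAms _ _)),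
      ENNReal.toReal_sum (fun a _ => measure_ne_top μ _)]
    have hx1 : ∀ y ∈ H, (μ (⋃ x ∈ H, (GM s(v,y) ∩ A u x))).toReal
        = (h:ℝ) * ((1/(2*(n:ℝ)-3)) * (1/((n:ℝ)-1))) := by
      intro y hy
      have hdisjI : (↑H : Set (Fin n)).PairwiseDisjoint (fun x => GM s(v,y) ∩ A u x) := by
        intro a ha b hb hab
        refine Set.disjoint_left.mpr fun ω h1 h2 => ?_
        exact hAdisj u a b (hHu a (by simpa using ha)) (hHu b (by simpa using hb)) hab
          ω h1.2 h2.2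
      rw [measure_biUnion_finset hdisjI (fun b _ => (hGMms _).inter (hAms _ _)),
        ENNReal.toReal_sum (fun a _ => measure_ne_top μ _)]
      have hy1 : ∀ x ∈ H, (μ (GM s(v,y) ∩ A u x)).toReal
          = (1/(2*(n:ℝ)-3)) * (1/((n:ℝ)-1)) := by
        intro x hx
        exact hBval u (Or.inl rfl) s(v,y) (hmemW v (Or.inr rfl) y (hHv y hy))
          (fun z => hcvz y hy z) x (hHu x hx)
      rw [Finset.sum_congr rfl hy1, Finset.sum_const, hHcard, nsmul_eq_mul]
    rw [Finset.sum_congr rfl hx1, Finset.sum_const, hHcard, nsmul_eq_mul]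
  -- assemble
  have hjoint : ∫ ω, X u ω * X v ω ∂μ
      = 2 * ((h:ℝ)^2 * ((1/(2*(n:ℝ)-3)) * (1/((n:ℝ)-1)))) := by
    rw [hIXuv, hmuT, ENNReal.toReal_add (measure_ne_top μ _) (measure_ne_top μ _),
      hT1val, hT2val]
    ring
  have hXuval := hIX u (Or.inl rfl)
  have hXvval := hIX v (Or.inr rfl)
  rw [hjoint, hXuval, hXvval]
  have hN1ne : ((n:ℝ) - 1) ≠ 0 := ne_of_gt hN1pos
  have h2N3ne : (2*(n:ℝ) - 3) ≠ 0 := ne_of_gt h2N3pos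
  refine ⟨?_, ?_, ?_⟩
  · field_simp
    ring
  · have heq : 2 * ((h:ℝ)^2 * ((1/(2*(n:ℝ)-3)) * (1/((n:ℝ)-1))))
        - (h:ℝ) * (1/((n:ℝ)-1)) * ((h:ℝ) * (1/((n:ℝ)-1)))
        = (h:ℝ)^2 / (((n:ℝ)-1)^2 * (2*(n:ℝ)-3)) := by
      field_simp
      ring
    rw [heq]
    exact div_pos (pow_pos hhR 2) (mul_pos (pow_pos hN1pos 2) h2N3pos)
  · field_simp
    ring
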